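/- With λ ≥ 0, 0 < α < 1, and (i-1)N+1 ≤ n ≤ iN, the sum ∑_{q=0}^{i-1} λ^q ε_{n-qN}^{(q)} is bounded by C (1 + ∑_{q=1}^{i-1} λ^q (Γ(2-α))^{q-1}/Γ(qα+1) · t_{n-qN}^{qα}), where ε_{n-qN}^{(q)} denotes the first entry of J^q Z_2 with Z_2 = (1,...,1)^T, ε^{(0)}_n = 1, t_m = mρ, and C depends only on α and i. -/

import Mathlib

open Finset
section
set_option linter.unusedTactic false
set_option linter.unreachableTactic false

lemma bern_down {b x : ℝ} (hb0 : 0 ≤ b) (hb1 : b ≤ 1) (hx : 1 ≤ x) :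
    (x - 1) ^ b ≤ x ^ b * (1 + b * (-1 / x)) := by
  have hx0 : (0:ℝ) < x := lt_of_lt_of_le one_pos hx
  have hs : (-1:ℝ) ≤ -1 / x := by
    rw [neg_div]
    have : 1 / x ≤ 1 := by
      rw [div_le_one hx0]; exact hx
    linarith
  have h := rpow_one_add_le_one_add_mul_self hs hb0 hb1
  have hxe : x - 1 = x * (1 + -1 / x) := by field_simp <;> ring
  rw [hxe, Real.mul_rpow hx0.le (by linarith)]
  exact mul_le_mul_of_nonneg_left h (Real.rpow_nonneg hx0.le b)

lemma bern_up {b x : ℝ} (hb0 : 0 ≤ b) (hb1 : b ≤ 1) (hx : 1 ≤ x) :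
    (x + 1) ^ b ≤ x ^ b * (1 + b * (1 / x)) := by
  have hx0 : (0:ℝ) < x := lt_of_lt_of_le one_pos hx
  have hs : (-1:ℝ) ≤ 1 / x := le_trans (by norm_num) (by positivity : (0:ℝ) ≤ 1/x)
  have h := rpow_one_add_le_one_add_mul_self hs hb0 hb1
  have hxe : x + 1 = x * (1 + 1 / x) := by field_simp <;> ring
  rw [hxe, Real.mul_rpow hx0.le (by positivity)]
  exact mul_le_mul_of_nonneg_left h (Real.rpow_nonneg hx0.le b)

variable {α ρ : ℝ} (hα0 : 0 < α) (hα1 : α < 1) (hρ : 0 < ρ) {a P : ℕ → ℝ}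
  (ha : ∀ k : ℕ, a k = (((k : ℝ) + 1) ^ (1 - α) - (k : ℝ) ^ (1 - α)) /
          (Real.Gamma (2 - α) * ρ ^ α))

include hα0 hα1 hρ ha

lemma denom_pos : 0 < Real.Gamma (2 - α) * ρ ^ α :=
  mul_pos (Real.Gamma_pos_of_pos (by linarith)) (Real.rpow_pos_of_pos hρ α)

lemma a_pos (k : ℕ) : 0 < a k := by
  rw [ha k]
  apply div_pos _ (denom_pos hα0 hα1 hρ ha)
  have : ((k:ℝ)) ^ (1-α) < ((k:ℝ)+1) ^ (1-α) :=
    Real.rpow_lt_rpow (Nat.cast_nonneg k) (by linarith) (by linarith)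
  linarith

lemma a_antitone : Antitone a := by
  apply antitone_nat_of_succ_le
  intro k
  rw [ha k, ha (k+1)]
  have hb0 : (0:ℝ) ≤ 1 - α := by linarith
  have hb1 : (1:ℝ) - α ≤ 1 := by linarith
  have hx : (1:ℝ) ≤ (k:ℝ) + 1 := by
    have := Nat.cast_nonneg (α := ℝ) k; linarith
  have h1 := bern_up hb0 hb1 hx
  have h2 := bern_down hb0 hb1 hx
  have hxx : (k:ℝ) + 1 - 1 = (k:ℝ) := by ring
  rw [hxx] at h2
  have hsum : ((k:ℝ)+1) ^ (1-α) * (1 + (1-α) * (1 / ((k:ℝ)+1)))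
      + ((k:ℝ)+1) ^ (1-α) * (1 + (1-α) * (-1 / ((k:ℝ)+1)))
      = 2 * ((k:ℝ)+1) ^ (1-α) := by ring
  gcongr ?_ / _
  · exact (denom_pos hα0 hα1 hρ ha).le
  · push_cast; linarith

variable (hP0 : P 0 = 1 / a 0)
  (hPrec : ∀ l : ℕ, P (l + 1) =
    (1 / a 0) * ∑ m ∈ Finset.range (l + 1), P m * (a (l - m) - a (l + 1 - m)))

include hP0 hPrec

lemma conservation (l : ℕ) :
    ∑ m ∈ Finset.range (l + 1), P m * a (l - m) = 1 := by
  have ha0 : a 0 ≠ 0 := (a_pos hα0 hα1 hρ ha 0).ne'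
  induction l with
  | zero => simp [hP0, ha0]
  | succ l ih =>
    rw [Finset.sum_range_succ]
    have h1 : P (l+1) * a 0 = ∑ m ∈ Finset.range (l + 1),
        P m * (a (l - m) - a (l + 1 - m)) := by
      rw [hPrec l, one_div, mul_comm, ← mul_assoc, mul_inv_cancel₀ ha0, one_mul]
    rw [Nat.sub_self, h1, ← ih, ← Finset.sum_add_distrib]
    apply Finset.sum_congr rfl
    intro m hm
    ring

lemma P_nonneg (m : ℕ) : 0 ≤ P m := by
  induction m using Nat.strong_induction_on with
  | _ m ih =>
    match m with
    | 0 =>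
      rw [hP0]
      have := a_pos hα0 hα1 hρ ha 0
      positivity
    | l+1 =>
      rw [hPrec l]
      apply mul_nonneg
      · have := a_pos hα0 hα1 hρ ha 0; positivity
      · apply Finset.sum_nonneg
        intro m hm
        rw [Finset.mem_range] at hm
        apply mul_nonneg (ih m (by omega))
        have heq : l + 1 - m = (l - m) + 1 := by omega
        rw [heq, sub_nonneg]
        exact a_antitone hα0 hα1 hρ ha (by omega : l - m ≤ l - m + 1)

lemma sumP_le (M : ℕ) :
    ∑ m ∈ Finset.range M, P m ≤
      (Real.Gamma (2 - α) / (1 - α)) * ρ ^ α * (M : ℝ) ^ α := by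
  cases M with
  | zero => simp [Real.zero_rpow hα0.ne']
  | succ M' =>
    have hΓ : 0 < Real.Gamma (2 - α) := Real.Gamma_pos_of_pos (by linarith)
    have hx : (1:ℝ) ≤ (M' : ℝ) + 1 := by
      have := Nat.cast_nonneg (α := ℝ) M'; linarith
    have hx0 : (0:ℝ) < (M' : ℝ) + 1 := by linarith
    have hbd := bern_down (by linarith : (0:ℝ) ≤ 1 - α) (by linarith) hx
    have hxx : (M' : ℝ) + 1 - 1 = (M' : ℝ) := by ring
    rw [hxx] at hbd
    have hb0' : (0:ℝ) < ((M' : ℝ) + 1) ^ (1 - α) := Real.rpow_pos_of_pos hx0 _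
    have hnum : (1 - α) * ((M' : ℝ) + 1) ^ (1 - α) / ((M' : ℝ) + 1)
        ≤ ((M' : ℝ) + 1) ^ (1 - α) - (M' : ℝ) ^ (1 - α) := by
      have heq : ((M' : ℝ) + 1) ^ (1 - α) * (1 + (1 - α) * (-1 / ((M' : ℝ) + 1)))
          = ((M' : ℝ) + 1) ^ (1 - α)
            - (1 - α) * ((M' : ℝ) + 1) ^ (1 - α) / ((M' : ℝ) + 1) := by
        field_simp
        ring
      linarith
    have hnum0 : (0:ℝ) < ((M' : ℝ) + 1) ^ (1 - α) - (M' : ℝ) ^ (1 - α) := by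
      have : (0:ℝ) < (1 - α) * ((M' : ℝ) + 1) ^ (1 - α) / ((M' : ℝ) + 1) := by
        apply div_pos (mul_pos (by linarith) hb0') hx0
      linarith
    have haM : 0 < a M' := a_pos hα0 hα1 hρ ha M'
    have key : (∑ m ∈ Finset.range (M' + 1), P m) * a M' ≤ 1 := by
      rw [← conservation hα0 hα1 hρ ha hP0 hPrec M', Finset.sum_mul]
      apply Finset.sum_le_sum
      intro m _
      exact mul_le_mul_of_nonneg_left (a_antitone hα0 hα1 hρ ha (Nat.sub_le M' m))
        (P_nonneg hα0 hα1 hρ ha hP0 hPrec m)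
    have hSS : ∑ m ∈ Finset.range (M' + 1), P m ≤ 1 / a M' := by
      rw [le_div_iff₀ haM]; exact key
    refine hSS.trans ?_
    rw [ha M', one_div_div, div_le_iff₀ hnum0]
    push_cast
    have hxpow : ((M' : ℝ) + 1) ^ α * ((M' : ℝ) + 1) ^ (1 - α) = (M' : ℝ) + 1 := by
      rw [← Real.rpow_add hx0]; norm_num
    have hC : 0 ≤ Real.Gamma (2 - α) / (1 - α) * ρ ^ α * ((M' : ℝ) + 1) ^ α := by
      have h1 : (0:ℝ) < ρ ^ α := Real.rpow_pos_of_pos hρ α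
      have h2 : (0:ℝ) < ((M' : ℝ) + 1) ^ α := Real.rpow_pos_of_pos hx0 α
      have h3 : (0:ℝ) < 1 - α := by linarith
      positivity
    have hca : (1:ℝ) - α ≠ 0 := by linarith
    have hxne : (M' : ℝ) + 1 ≠ 0 := hx0.ne'
    calc Real.Gamma (2 - α) * ρ ^ α
        = Real.Gamma (2 - α) / (1 - α) * ρ ^ α * ((M' : ℝ) + 1) ^ α
            * ((1 - α) * ((M' : ℝ) + 1) ^ (1 - α) / ((M' : ℝ) + 1)) := by
          rw [show Real.Gamma (2 - α) / (1 - α) * ρ ^ α * ((M' : ℝ) + 1) ^ α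
              * ((1 - α) * ((M' : ℝ) + 1) ^ (1 - α) / ((M' : ℝ) + 1))
              = Real.Gamma (2 - α) * ρ ^ α
                * ((((M' : ℝ) + 1) ^ α * ((M' : ℝ) + 1) ^ (1 - α)) / ((M' : ℝ) + 1))
                * ((1 - α) / (1 - α)) from by ring,
            hxpow, div_self hca, div_self hxne, mul_one, mul_one]
      _ ≤ Real.Gamma (2 - α) / (1 - α) * ρ ^ α * ((M' : ℝ) + 1) ^ α
            * (((M' : ℝ) + 1) ^ (1 - α) - (M' : ℝ) ^ (1 - α)) := by
          exact mul_le_mul_of_nonneg_left hnum hC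
end


lemma matkey (n N : ℕ) (P : ℕ → ℝ) (hP : ∀ m, 0 ≤ P m)
    (J : Matrix (Fin n) (Fin n) ℝ)
    (hJ : ∀ k l : Fin n, J k l =
      if (k : ℕ) + N ≤ (l : ℕ) then P ((l : ℕ) - (k : ℕ) - N) else 0)
    (q : ℕ) :
    ∀ k : Fin n,
      0 ≤ ((J ^ q).mulVec (fun _ => (1:ℝ))) k ∧
      ((J ^ q).mulVec (fun _ => (1:ℝ))) k
        ≤ (∑ m ∈ Finset.range (n - (k : ℕ) - q * N), P m) ^ q := by
  induction q with
  | zero =>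
    intro k
    simp [Matrix.one_mulVec]
  | succ q ih =>
    intro k
    have hsm : (q + 1) * N = q * N + N := by ring
    have hrw : ((J ^ (q+1)).mulVec (fun _ => (1:ℝ))) k
        = ∑ l : Fin n, J k l * ((J ^ q).mulVec (fun _ => (1:ℝ))) l := by
      rw [pow_succ', ← Matrix.mulVec_mulVec]
      simp [Matrix.mulVec, dotProduct]
    set w : Fin n → ℝ := (J ^ q).mulVec (fun _ => (1:ℝ)) with hw
    have hterm_nonneg : ∀ l : Fin n, 0 ≤ J k l * w l := by
      intro l
      apply mul_nonneg _ (ih l).1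
      rw [hJ k l]
      split
      · exact hP _
      · exact le_refl 0
    refine ⟨by rw [hrw]; exact Finset.sum_nonneg fun l _ => hterm_nonneg l, ?_⟩
    set D : ℝ := ∑ m ∈ Finset.range (n - (k : ℕ) - (q + 1) * N), P m with hD
    have hD0 : 0 ≤ D := Finset.sum_nonneg fun m _ => hP m
    have hstep : ∀ l : Fin n, J k l * w l ≤
        (if (l : ℕ) ∈ Finset.Ico ((k : ℕ) + N) (n - q * N)
          then P ((l : ℕ) - (k : ℕ) - N) * D ^ q else 0) := by
      intro l
      rw [hJ k l]
      by_cases h1 : (k : ℕ) + N ≤ (l : ℕ)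
      · by_cases h2 : (l : ℕ) < n - q * N
        · rw [if_pos h1, if_pos (Finset.mem_Ico.mpr ⟨h1, h2⟩)]
          apply mul_le_mul_of_nonneg_left _ (hP _)
          refine (ih l).2.trans ?_
          apply pow_le_pow_left₀ (Finset.sum_nonneg fun m _ => hP m) _ q
          apply Finset.sum_le_sum_of_subset_of_nonneg
          · apply Finset.range_subset_range.mpr
            omega
          · intro m _ _; exact hP m
        · rw [if_pos h1, if_neg (by rw [Finset.mem_Ico]; tauto)]
          rcases Nat.eq_zero_or_pos q with hq | hq
          · exfalso
            subst hq
            simp only [Nat.zero_mul, Nat.sub_zero] at h2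
            exact h2 l.isLt
          · have hlt := l.isLt
            have hz : n - (l : ℕ) - q * N = 0 := by omega
            have hwl : w l ≤ 0 := by
              have h3 := (ih l).2
              rw [hz] at h3
              simpa [zero_pow hq.ne'] using h3
            calc P ((l : ℕ) - (k : ℕ) - N) * w l
                ≤ P ((l : ℕ) - (k : ℕ) - N) * 0 :=
                  mul_le_mul_of_nonneg_left hwl (hP _)
              _ = 0 := by ring
      · rw [if_neg h1, if_neg (by rw [Finset.mem_Ico]; tauto)]
        simp
    rw [hrw]
    have hIco : Finset.Ico ((k : ℕ) + N) (n - q * N) ⊆ Finset.range n := by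
      intro j hj
      rw [Finset.mem_range]
      exact lt_of_lt_of_le (Finset.mem_Ico.mp hj).2 (Nat.sub_le n _)
    calc ∑ l : Fin n, J k l * w l
        ≤ ∑ l : Fin n, (if (l : ℕ) ∈ Finset.Ico ((k : ℕ) + N) (n - q * N)
            then P ((l : ℕ) - (k : ℕ) - N) * D ^ q else 0) :=
          Finset.sum_le_sum fun l _ => hstep l
      _ = ∑ j ∈ Finset.range n, (if j ∈ Finset.Ico ((k : ℕ) + N) (n - q * N)
            then P (j - (k : ℕ) - N) * D ^ q else 0) :=
          Fin.sum_univ_eq_sum_range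
            (fun j => if j ∈ Finset.Ico ((k : ℕ) + N) (n - q * N)
              then P (j - (k : ℕ) - N) * D ^ q else 0) n
      _ = ∑ j ∈ Finset.range n ∩ Finset.Ico ((k : ℕ) + N) (n - q * N),
            P (j - (k : ℕ) - N) * D ^ q := by
          rw [Finset.sum_ite_mem]
      _ = ∑ j ∈ Finset.Ico ((k : ℕ) + N) (n - q * N), P (j - (k : ℕ) - N) * D ^ q := by
          rw [Finset.inter_eq_right.mpr hIco]
      _ = ∑ m ∈ Finset.range ((n - q * N) - ((k : ℕ) + N)),
            P (((k : ℕ) + N + m) - (k : ℕ) - N) * D ^ q :=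
          Finset.sum_Ico_eq_sum_range _ _ _
      _ = (∑ m ∈ Finset.range (n - (k : ℕ) - (q + 1) * N), P m) * D ^ q := by
          have hidx : (n - q * N) - ((k : ℕ) + N) = n - (k : ℕ) - (q + 1) * N := by omega
          rw [hidx, ← Finset.sum_mul]
          congr 1
          apply Finset.sum_congr rfl
          intro m _
          congr 1
          omega
      _ = D ^ (q + 1) := by rw [← hD, pow_succ']


/-- Bound on `∑_{q=0}^{i-1} λ^q ε_{n-qN}^{(q)}`, where `ε_{n-qN}^{(q)}` is the first
entry of `J^q Z₂`, `Z₂ = (1,…,1)ᵀ`, and `ε^{(0)} = 1`. -/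
theorem stmt_18 (α : ℝ) (hα0 : 0 < α) (hα1 : α < 1) (i : ℕ) (hi : 1 ≤ i) :
    ∃ C : ℝ, 0 < C ∧
      ∀ (ρ : ℝ) (_ : 0 < ρ)
        (N n : ℕ) (_ : 1 ≤ N) (hn1 : (i - 1) * N + 1 ≤ n) (_ : n ≤ i * N)
        (lam : ℝ) (_ : 0 ≤ lam)
        (a P : ℕ → ℝ)
        (_ : ∀ k : ℕ, a k = (((k : ℝ) + 1) ^ (1 - α) - (k : ℝ) ^ (1 - α)) /
          (Real.Gamma (2 - α) * ρ ^ α))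
        (_ : P 0 = 1 / a 0)
        (_ : ∀ l : ℕ, P (l + 1) =
          (1 / a 0) * ∑ m ∈ Finset.range (l + 1), P m * (a (l - m) - a (l + 1 - m)))
        (J : Matrix (Fin n) (Fin n) ℝ)
        (_ : ∀ k l : Fin n, J k l =
          if (k : ℕ) + N ≤ (l : ℕ) then P ((l : ℕ) - (k : ℕ) - N) else 0),
      ∑ q ∈ Finset.range i,
          lam ^ q * (if q = 0 then 1 else ((J ^ q).mulVec (fun _ => (1 : ℝ))) ⟨0, by omega⟩)
        ≤ C * (1 + ∑ q ∈ Finset.Icc 1 (i - 1),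
            lam ^ q * (Real.Gamma (2 - α)) ^ (q - 1) / Real.Gamma ((q : ℝ) * α + 1) *
              (((n - q * N : ℕ) : ℝ) * ρ) ^ ((q : ℝ) * α)) := by
  have hΓ : 0 < Real.Gamma (2 - α) := Real.Gamma_pos_of_pos (by linarith)
  set K : ℝ := Real.Gamma (2 - α) / (1 - α) with hK
  have hK0 : 0 < K := div_pos hΓ (by linarith)
  have hGq : ∀ q : ℕ, 0 < Real.Gamma ((q : ℝ) * α + 1) := by
    intro q
    apply Real.Gamma_pos_of_pos
    have : (0:ℝ) ≤ (q : ℝ) * α := by positivity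
    linarith
  set C : ℝ := 1 + ∑ q ∈ Finset.Icc 1 (i - 1),
      K ^ q * Real.Gamma ((q : ℝ) * α + 1) / (Real.Gamma (2 - α)) ^ (q - 1) with hC
  have hCsum : (0:ℝ) ≤ ∑ q ∈ Finset.Icc 1 (i - 1),
      K ^ q * Real.Gamma ((q : ℝ) * α + 1) / (Real.Gamma (2 - α)) ^ (q - 1) := by
    apply Finset.sum_nonneg
    intro q _
    have h1 := hGq q
    positivity
  have hC1 : (1:ℝ) ≤ C := by rw [hC]; linarith
  refine ⟨C, by linarith, ?_⟩
  intro ρ hρ N n hN hn1 hn2 lam hlam a P ha hP0 hPrec J hJ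
  have hn0 : 0 < n := by omega
  have hPn : ∀ m, 0 ≤ P m := P_nonneg hα0 hα1 hρ ha hP0 hPrec
  -- split off the q = 0 term
  have hsplit : Finset.range i = insert 0 (Finset.Icc 1 (i - 1)) := by
    ext x
    simp only [Finset.mem_range, Finset.mem_insert, Finset.mem_Icc]
    omega
  rw [hsplit, Finset.sum_insert (by simp)]
  simp only [pow_zero, if_pos rfl, one_mul]
  -- termwise bound
  have hterm : ∀ q ∈ Finset.Icc 1 (i - 1),
      lam ^ q * (if q = 0 then 1 else ((J ^ q).mulVec (fun _ => (1 : ℝ))) ⟨0, hn0⟩)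
        ≤ C * (lam ^ q * (Real.Gamma (2 - α)) ^ (q - 1) / Real.Gamma ((q : ℝ) * α + 1) *
            (((n - q * N : ℕ) : ℝ) * ρ) ^ ((q : ℝ) * α)) := by
    intro q hq
    rw [Finset.mem_Icc] at hq
    rw [if_neg (by omega)]
    set t : ℝ := ((n - q * N : ℕ) : ℝ) * ρ with ht
    have ht0 : 0 ≤ t := by positivity
    have hm := (matkey n N P hPn J hJ q ⟨0, hn0⟩).2
    simp only at hm
    have hsum := sumP_le hα0 hα1 hρ ha hP0 hPrec (n - 0 - q * N)
    have heps : ((J ^ q).mulVec (fun _ => (1:ℝ))) ⟨0, hn0⟩ ≤ K ^ q * t ^ ((q : ℝ) * α) := by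
      refine hm.trans ?_
      have h2 : (∑ m ∈ Finset.range (n - (0:ℕ) - q * N), P m) ^ q
          ≤ (K * ρ ^ α * ((n - 0 - q * N : ℕ) : ℝ) ^ α) ^ q :=
        pow_le_pow_left₀ (Finset.sum_nonneg fun m _ => hPn m) hsum q
      refine h2.trans_eq ?_
      have hz : n - 0 - q * N = n - q * N := by omega
      rw [hz]
      have hmr : K * ρ ^ α * ((n - q * N : ℕ) : ℝ) ^ α = K * t ^ α := by
        rw [ht, Real.mul_rpow (Nat.cast_nonneg _) hρ.le]
        ring
      rw [hmr, mul_pow, ← Real.rpow_natCast (t ^ α) q, ← Real.rpow_mul ht0]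
      rw [mul_comm α (q : ℝ)]
    -- constant comparison
    have hsingle : K ^ q * Real.Gamma ((q : ℝ) * α + 1) / (Real.Gamma (2 - α)) ^ (q - 1) ≤ C := by
      rw [hC]
      have := Finset.single_le_sum
        (f := fun q : ℕ => K ^ q * Real.Gamma ((q : ℝ) * α + 1) / (Real.Gamma (2 - α)) ^ (q - 1))
        (fun r _ => by have := hGq r; positivity) (Finset.mem_Icc.mpr hq)
      linarith
    have hGpow : (0:ℝ) < (Real.Gamma (2 - α)) ^ (q - 1) := pow_pos hΓ _
    have hKC : K ^ q ≤ C * (Real.Gamma (2 - α)) ^ (q - 1) / Real.Gamma ((q : ℝ) * α + 1) := by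
      rw [le_div_iff₀ (hGq q)]
      rw [div_le_iff₀ hGpow] at hsingle
      linarith
    calc lam ^ q * ((J ^ q).mulVec (fun _ => (1:ℝ))) ⟨0, hn0⟩
        ≤ lam ^ q * (K ^ q * t ^ ((q : ℝ) * α)) :=
          mul_le_mul_of_nonneg_left heps (pow_nonneg hlam q)
      _ ≤ lam ^ q * ((C * (Real.Gamma (2 - α)) ^ (q - 1) / Real.Gamma ((q : ℝ) * α + 1))
            * t ^ ((q : ℝ) * α)) := by
          apply mul_le_mul_of_nonneg_left _ (pow_nonneg hlam q)
          apply mul_le_mul_of_nonneg_right hKC (Real.rpow_nonneg ht0 _)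
      _ = C * (lam ^ q * (Real.Gamma (2 - α)) ^ (q - 1) / Real.Gamma ((q : ℝ) * α + 1)
            * t ^ ((q : ℝ) * α)) := by ring
  calc 1 + ∑ q ∈ Finset.Icc 1 (i - 1),
        lam ^ q * (if q = 0 then 1 else ((J ^ q).mulVec (fun _ => (1 : ℝ))) ⟨0, hn0⟩)
      ≤ 1 + ∑ q ∈ Finset.Icc 1 (i - 1),
          C * (lam ^ q * (Real.Gamma (2 - α)) ^ (q - 1) / Real.Gamma ((q : ℝ) * α + 1) *
            (((n - q * N : ℕ) : ℝ) * ρ) ^ ((q : ℝ) * α)) :=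
        add_le_add le_rfl (Finset.sum_le_sum hterm)
    _ = 1 + C * ∑ q ∈ Finset.Icc 1 (i - 1),
          lam ^ q * (Real.Gamma (2 - α)) ^ (q - 1) / Real.Gamma ((q : ℝ) * α + 1) *
            (((n - q * N : ℕ) : ℝ) * ρ) ^ ((q : ℝ) * α) := by
        rw [Finset.mul_sum]
    _ ≤ C * (1 + ∑ q ∈ Finset.Icc 1 (i - 1),
          lam ^ q * (Real.Gamma (2 - α)) ^ (q - 1) / Real.Gamma ((q : ℝ) * α + 1) *
            (((n - q * N : ℕ) : ℝ) * ρ) ^ ((q : ℝ) * α)) := by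
        rw [mul_add, mul_one]
        linarith
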